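/- Let α > 0 and let m : (0,∞) → (0,∞) be such that r^α·m(r) is non-increasing. Then for every δ > 0, ∫_0^δ (3 + ln(δ/η)) / (η m(η)) dη ≤ C_α / m(δ), where C_α = (1 + 3α)/α². -/

import Mathlib

open MeasureTheory Set Real

lemma wib_integrable {α δ : ℝ} (hα : 0 < α) (hδ : 0 < δ) :
    IntervalIntegrable (fun η : ℝ => (3 + Real.log (δ / η)) * η ^ (α - 1)) volume 0 δ := by
  have hmeas : AEStronglyMeasurable (fun η : ℝ => (3 + Real.log (δ / η)) * η ^ (α - 1))
      (volume.restrict (Ioc 0 δ)) := by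
    apply ContinuousOn.aestronglyMeasurable _ measurableSet_Ioc
    intro x hx
    have hx0 : (0:ℝ) < x := hx.1
    apply ContinuousWithinAt.mul
    · apply ContinuousWithinAt.add continuousWithinAt_const
      exact ((Real.continuousAt_log (div_pos hδ hx0).ne').comp
        (continuousAt_const.div continuousAt_id hx0.ne')).continuousWithinAt
    · exact (Real.continuousAt_rpow_const x _ (Or.inl hx0.ne')).continuousWithinAt
  have hg : IntervalIntegrable
      (fun η : ℝ => 3 * η ^ (α - 1) + (2 / α) * δ ^ (α / 2) * η ^ (α / 2 - 1)) volume 0 δ := by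
    apply IntervalIntegrable.add
    · exact (intervalIntegral.intervalIntegrable_rpow' (by linarith)).const_mul 3
    · exact (intervalIntegral.intervalIntegrable_rpow' (by linarith)).const_mul _
  rw [intervalIntegrable_iff_integrableOn_Ioc_of_le hδ.le] at hg ⊢
  apply hg.mono' hmeas
  rw [ae_restrict_iff' measurableSet_Ioc]
  filter_upwards with η hη
  have hη0 : (0:ℝ) < η := hη.1
  have h1 : (1:ℝ) ≤ δ / η := (one_le_div hη0).2 hη.2
  have hlog0 : 0 ≤ Real.log (δ / η) := Real.log_nonneg h1
  have hr : (0:ℝ) ≤ η ^ (α - 1) := Real.rpow_nonneg hη0.le _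
  have hr2 : (0:ℝ) ≤ η ^ (α / 2 - 1) := Real.rpow_nonneg hη0.le _
  have hc : (0:ℝ) ≤ (2 / α) * δ ^ (α / 2) :=
    mul_nonneg (by positivity) (Real.rpow_nonneg hδ.le _)
  have hlog : Real.log (δ / η) ≤ (2 / α) * δ ^ (α / 2) * η ^ (-(α / 2)) := by
    have h5 := Real.log_le_rpow_div (by positivity : (0:ℝ) ≤ δ / η)
      (by positivity : (0:ℝ) < α / 2)
    calc Real.log (δ / η) ≤ (δ / η) ^ (α / 2) / (α / 2) := h5
      _ = (2 / α) * δ ^ (α / 2) * η ^ (-(α / 2)) := by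
          rw [Real.div_rpow hδ.le hη0.le, Real.rpow_neg hη0.le]
          field_simp
  have hmul := mul_le_mul_of_nonneg_right hlog hr
  have hpow : (2 / α) * δ ^ (α / 2) * η ^ (-(α / 2)) * η ^ (α - 1)
      = (2 / α) * δ ^ (α / 2) * η ^ (α / 2 - 1) := by
    rw [mul_assoc, ← Real.rpow_add hη0]
    ring_nf
  rw [hpow] at hmul
  have key : (3 + Real.log (δ / η)) * η ^ (α - 1)
      ≤ 3 * η ^ (α - 1) + (2 / α) * δ ^ (α / 2) * η ^ (α / 2 - 1) := by nlinarith
  have hgn : (0:ℝ) ≤ 3 * η ^ (α - 1) + (2 / α) * δ ^ (α / 2) * η ^ (α / 2 - 1) :=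
    add_nonneg (by linarith) (mul_nonneg hc hr2)
  rw [Real.norm_eq_abs, abs_of_nonneg (mul_nonneg (by linarith) hr)]
  exact key

lemma wib_value {α δ : ℝ} (hα : 0 < α) (hδ : 0 < δ) :
    ∫ η in (0:ℝ)..δ, (3 + Real.log (δ / η)) * η ^ (α - 1)
      = (3 / α + 1 / α ^ 2) * δ ^ α := by
  set F : ℝ → ℝ := fun η => η ^ α / α * (3 + Real.log (δ / η)) + η ^ α / α ^ 2 with hF
  have hderiv : ∀ x ∈ Ioo (0:ℝ) δ,
      HasDerivAt F ((3 + Real.log (δ / x)) * x ^ (α - 1)) x := by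
    intro x hx
    have hx0 : (0:ℝ) < x := hx.1
    have h1 : HasDerivAt (fun η : ℝ => η ^ α) (α * x ^ (α - 1)) x :=
      Real.hasDerivAt_rpow_const (Or.inl hx0.ne')
    have h2 : HasDerivAt (fun η : ℝ => Real.log (δ / η)) (-x⁻¹) x := by
      have h3 : HasDerivAt (fun η : ℝ => Real.log δ - Real.log η) (-x⁻¹) x := by
        simpa using (Real.hasDerivAt_log hx0.ne').const_sub (Real.log δ)
      apply h3.congr_of_eventuallyEq
      filter_upwards [eventually_gt_nhds hx0] with y hy
      rw [Real.log_div hδ.ne' hy.ne']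
    have h4 := ((h1.div_const α).mul ((hasDerivAt_const x (3:ℝ)).add h2)).add
      (h1.div_const (α ^ 2))
    convert h4 using 1
    case e'_4 => rfl
    case e'_5 => rfl
    case e'_8 => rfl
    have hxα : x ^ α = x ^ (α - 1) * x := by
      rw [← Real.rpow_add_one hx0.ne' (α - 1)]; ring_nf
    simp only [Pi.add_apply]
    rw [hxα]
    field_simp
    ring
  have ha : Filter.Tendsto F (nhdsWithin 0 (Ioi 0)) (nhds 0) := by
    have h1 : Filter.Tendsto (fun η : ℝ => η ^ α) (nhdsWithin 0 (Ioi 0)) (nhds 0) := by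
      have h := (Real.continuousAt_rpow_const 0 α (Or.inr hα.le)).tendsto
      rw [Real.zero_rpow hα.ne'] at h
      exact h.mono_left nhdsWithin_le_nhds
    have h2 : Filter.Tendsto (fun η : ℝ => Real.log η * η ^ α)
        (nhdsWithin 0 (Ioi 0)) (nhds 0) := tendsto_log_mul_rpow_nhdsGT_zero hα
    have h3 : Filter.Tendsto
        (fun η : ℝ => η ^ α / α * (3 + Real.log δ) - Real.log η * η ^ α / α + η ^ α / α ^ 2)
        (nhdsWithin 0 (Ioi 0)) (nhds 0) := by
      have := (((h1.div_const α).mul_const (3 + Real.log δ)).sub (h2.div_const α)).add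
        (h1.div_const (α ^ 2))
      simpa using this
    apply h3.congr'
    filter_upwards [self_mem_nhdsWithin] with y hy
    have hy0 : (0:ℝ) < y := hy
    simp only [hF]
    rw [Real.log_div hδ.ne' hy0.ne']
    ring
  have hb : Filter.Tendsto F (nhdsWithin δ (Iio δ)) (nhds (F δ)) := by
    have hc : ContinuousAt F δ := by
      have hrc : ContinuousAt (fun η : ℝ => η ^ α) δ :=
        Real.continuousAt_rpow_const δ α (Or.inl hδ.ne')
      have hlc : ContinuousAt (fun η : ℝ => Real.log (δ / η)) δ := by
        apply (Real.continuousAt_log (by simp [hδ.ne'])).comp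
        exact continuousAt_const.div continuousAt_id hδ.ne'
      exact ((hrc.div_const α).mul (continuousAt_const.add hlc)).add (hrc.div_const (α ^ 2))
    exact hc.continuousWithinAt
  rw [intervalIntegral.integral_eq_sub_of_hasDerivAt_of_tendsto hδ hderiv
    (wib_integrable hα hδ) ha hb]
  simp only [hF, div_self hδ.ne', Real.log_one]
  ring

/-- **A weighted integral bound.** If `α > 0` and `r^α m(r)` is non-increasing on
`(0,∞)`, then for every `δ > 0`,
`∫_0^δ (3 + ln(δ/η)) / (η m(η)) dη ≤ C_α / m(δ)` with `C_α = (1+3α)/α²`. -/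
theorem weighted_integral_bound
    (α : ℝ) (hα : 0 < α) (m : ℝ → ℝ)
    (hm_pos : ∀ r > (0:ℝ), 0 < m r)
    (hm_decay : AntitoneOn (fun r => r ^ α * m r) (Ioi 0)) :
    ∀ δ > (0:ℝ),
      ∫⁻ η in Ioo (0:ℝ) δ, ENNReal.ofReal ((3 + Real.log (δ / η)) / (η * m η))
        ≤ ENNReal.ofReal (((1 + 3 * α) / α ^ 2) / m δ) := by
  intro δ hδ
  have hmδ : 0 < m δ := hm_pos δ hδ
  have hδα : 0 < δ ^ α := Real.rpow_pos_of_pos hδ α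
  have hdp : 0 < δ ^ α * m δ := mul_pos hδα hmδ
  have hpt : ∀ η ∈ Ioo (0:ℝ) δ,
      (3 + Real.log (δ / η)) / (η * m η)
        ≤ (3 + Real.log (δ / η)) * η ^ (α - 1) / (δ ^ α * m δ) := by
    intro η hη
    have hη0 : (0:ℝ) < η := hη.1
    have hmη : 0 < m η := hm_pos η hη0
    have hanti : δ ^ α * m δ ≤ η ^ α * m η :=
      hm_decay (mem_Ioi.2 hη0) (mem_Ioi.2 hδ) hη.2.le
    have hl : 0 ≤ 3 + Real.log (δ / η) := by
      have := Real.log_nonneg ((one_le_div hη0).2 hη.2.le)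
      linarith
    have hpow : η ^ (α - 1) * η = η ^ α := by
      rw [← Real.rpow_add_one hη0.ne' (α - 1)]; ring_nf
    have h1 : 1 / (η * m η) ≤ η ^ (α - 1) / (δ ^ α * m δ) := by
      rw [div_le_div_iff₀ (mul_pos hη0 hmη) hdp, one_mul, ← mul_assoc, hpow]
      exact hanti
    calc (3 + Real.log (δ / η)) / (η * m η)
        = (3 + Real.log (δ / η)) * (1 / (η * m η)) := by ring
      _ ≤ (3 + Real.log (δ / η)) * (η ^ (α - 1) / (δ ^ α * m δ)) :=
          mul_le_mul_of_nonneg_left h1 hl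
      _ = (3 + Real.log (δ / η)) * η ^ (α - 1) / (δ ^ α * m δ) := by ring
  have hint : IntegrableOn
      (fun η : ℝ => (3 + Real.log (δ / η)) * η ^ (α - 1) / (δ ^ α * m δ))
      (Ioo 0 δ) volume := by
    have := ((intervalIntegrable_iff_integrableOn_Ioc_of_le hδ.le).mp
      (wib_integrable hα hδ)).mono_set Ioo_subset_Ioc_self
    exact this.div_const _
  have hnn : 0 ≤ᵐ[volume.restrict (Ioo (0:ℝ) δ)]
      (fun η : ℝ => (3 + Real.log (δ / η)) * η ^ (α - 1) / (δ ^ α * m δ)) := by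
    filter_upwards [ae_restrict_mem measurableSet_Ioo] with η hη
    have hη0 : (0:ℝ) < η := hη.1
    have hl : 0 ≤ 3 + Real.log (δ / η) := by
      have := Real.log_nonneg ((one_le_div hη0).2 hη.2.le)
      linarith
    exact div_nonneg (mul_nonneg hl (Real.rpow_nonneg hη0.le _)) hdp.le
  calc ∫⁻ η in Ioo (0:ℝ) δ, ENNReal.ofReal ((3 + Real.log (δ / η)) / (η * m η))
      ≤ ∫⁻ η in Ioo (0:ℝ) δ,
          ENNReal.ofReal ((3 + Real.log (δ / η)) * η ^ (α - 1) / (δ ^ α * m δ)) := by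
        apply lintegral_mono_ae
        rw [ae_restrict_iff' measurableSet_Ioo]
        filter_upwards with η hη
        exact ENNReal.ofReal_le_ofReal (hpt η hη)
    _ = ENNReal.ofReal
          (∫ η in Ioo (0:ℝ) δ, (3 + Real.log (δ / η)) * η ^ (α - 1) / (δ ^ α * m δ)) :=
        (ofReal_integral_eq_lintegral_ofReal hint hnn).symm
    _ ≤ ENNReal.ofReal (((1 + 3 * α) / α ^ 2) / m δ) := by
        apply ENNReal.ofReal_le_ofReal
        have hval : ∫ η in Ioo (0:ℝ) δ, (3 + Real.log (δ / η)) * η ^ (α - 1)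
            = (3 / α + 1 / α ^ 2) * δ ^ α := by
          rw [← MeasureTheory.integral_Ioc_eq_integral_Ioo,
            ← intervalIntegral.integral_of_le hδ.le, wib_value hα hδ]
        rw [integral_div, hval]
        apply le_of_eq
        field_simp
        ring
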